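/- arXiv:2012.07625 — 3 statements merged into one kernel-verified Lean document; each statement's English description precedes it below -/
import Mathlib

section
/- Let D > 0, Δ ∈ ℝ, and 0 ≤ λ < 1. If sqrt((D²(D−1)² + Δ²)/(D²(D+1)² + Δ²)) ≤ λ, then D ≤ (1+λ)/(1−λ) and |Δ| ≤ 2(1+λ)/(1−λ)². -/
set_option maxHeartbeats 1000000 in
/-- if the modulus `r` of the parameter of the projective derivative is
bounded by `λ < 1`, then `D ≤ (1+λ)/(1-λ)` and `|Δ| ≤ 2(1+λ)/(1-λ)²`. -/
theorem derivative_bounds (D Δ lam : ℝ) (hD : 0 < D) (hlam0 : 0 ≤ lam) (hlam1 : lam < 1)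
    (h : Real.sqrt ((D ^ 2 * (D - 1) ^ 2 + Δ ^ 2) / (D ^ 2 * (D + 1) ^ 2 + Δ ^ 2)) ≤ lam) :
    D ≤ (1 + lam) / (1 - lam) ∧ |Δ| ≤ 2 * (1 + lam) / (1 - lam) ^ 2 := by
  have hu : (0:ℝ) < 1 - lam := by linarith
  have hM : (0:ℝ) < D ^ 2 * (D + 1) ^ 2 + Δ ^ 2 := by positivity
  have hN : (0:ℝ) ≤ D ^ 2 * (D - 1) ^ 2 + Δ ^ 2 := by positivity
  have hq : (D ^ 2 * (D - 1) ^ 2 + Δ ^ 2) / (D ^ 2 * (D + 1) ^ 2 + Δ ^ 2) ≤ lam ^ 2 := by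
    have h0 : (0:ℝ) ≤ (D ^ 2 * (D - 1) ^ 2 + Δ ^ 2) / (D ^ 2 * (D + 1) ^ 2 + Δ ^ 2) :=
      div_nonneg hN hM.le
    have := Real.sq_sqrt h0
    nlinarith [Real.sqrt_nonneg ((D ^ 2 * (D - 1) ^ 2 + Δ ^ 2) / (D ^ 2 * (D + 1) ^ 2 + Δ ^ 2))]
  have key : D ^ 2 * (D - 1) ^ 2 + Δ ^ 2 ≤ lam ^ 2 * (D ^ 2 * (D + 1) ^ 2 + Δ ^ 2) := by
    rw [div_le_iff₀ hM] at hq; linarith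
  -- first bound
  have hx : 0 ≤ (1 - lam ^ 2) * Δ ^ 2 := mul_nonneg (by nlinarith) (sq_nonneg Δ)
  have k2 : (D * (D - 1)) ^ 2 ≤ (lam * (D * (D + 1))) ^ 2 := by nlinarith [key, hx]
  have k3 : D * (D - 1) ≤ lam * (D * (D + 1)) := by
    have h0 : (0:ℝ) ≤ lam * (D * (D + 1)) := by positivity
    nlinarith [k2, h0]
  have hDle : D * (1 - lam) ≤ 1 + lam := by
    have k4 : D - 1 ≤ lam * (D + 1) :=
      le_of_mul_le_mul_left (by nlinarith [k3] : D * (D - 1) ≤ D * (lam * (D + 1))) hD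
    nlinarith [k4]
  have h1 : D ≤ (1 + lam) / (1 - lam) := by
    rw [le_div_iff₀ hu]; linarith [hDle]
  refine ⟨h1, ?_⟩
  -- second bound
  have hsq : Δ ^ 2 * ((1 - lam) ^ 2) ^ 2 ≤ (2 * (1 + lam)) ^ 2 := by
    have hkey2 : Δ ^ 2 * (1 - lam ^ 2) ≤
        D ^ 2 * ((lam * (D + 1) + (D - 1)) * (lam * (D + 1) - (D - 1))) := by
      nlinarith [key]
    rcases le_or_gt ((lam * (D + 1) + (D - 1)) * (lam * (D + 1) - (D - 1))) 0 with hP | hP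
    · have hD2AB : D ^ 2 * ((lam * (D + 1) + (D - 1)) * (lam * (D + 1) - (D - 1))) ≤ 0 :=
        mul_nonpos_of_nonneg_of_nonpos (sq_nonneg D) hP
      have hΔ0 : Δ ^ 2 ≤ 0 := by nlinarith [hkey2, hD2AB]
      nlinarith [hΔ0, sq_nonneg Δ, sq_nonneg (2 * (1 + lam)), sq_nonneg ((1 - lam) ^ 2)]
    · have hlampos : 0 < lam := by
        rcases hlam0.lt_or_eq with h' | h'
        · exact h'
        · exfalso
          subst h'
          nlinarith [sq_nonneg (D - 1), hP]
      have hsum : 0 < (lam * (D + 1) + (D - 1)) + (lam * (D + 1) - (D - 1)) := by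
        have := mul_pos hlampos (show (0:ℝ) < D + 1 by linarith)
        linarith
      have hApos : 0 < lam * (D + 1) + (D - 1) := by
        by_contra hc
        push_neg at hc
        have hB : 0 < lam * (D + 1) - (D - 1) := by linarith
        nlinarith [mul_nonneg (neg_nonneg.2 hc) hB.le, hP]
      have hBpos : 0 < lam * (D + 1) - (D - 1) := by
        by_contra hc
        push_neg at hc
        nlinarith [mul_nonneg hApos.le (neg_nonneg.2 hc), hP]
      have g1 : (D * (1 - lam)) ^ 2 ≤ (1 + lam) ^ 2 := by
        have := mul_le_mul hDle hDle (by positivity) (by linarith : (0:ℝ) ≤ 1 + lam)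
        nlinarith [this]
      have g2 : (lam * (D + 1) + (D - 1)) * (1 - lam) ≤ 4 * lam := by
        nlinarith [mul_le_mul_of_nonneg_left hDle hlam0]
      have g3 : lam * (D + 1) - (D - 1) ≤ 1 + lam := by
        nlinarith [mul_pos hD hu]
      have t1 : (D * (1 - lam)) ^ 2 * ((lam * (D + 1) + (D - 1)) * (1 - lam)) ≤
          (1 + lam) ^ 2 * (4 * lam) :=
        mul_le_mul g1 g2 (mul_nonneg hApos.le hu.le) (by positivity)
      have t2 : (D * (1 - lam)) ^ 2 * ((lam * (D + 1) + (D - 1)) * (1 - lam)) *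
          (lam * (D + 1) - (D - 1)) ≤ (1 + lam) ^ 2 * (4 * lam) * (1 + lam) :=
        mul_le_mul t1 g3 hBpos.le (by positivity)
      have g5 : Δ ^ 2 * (1 - lam ^ 2) * (1 - lam) ^ 3 ≤
          D ^ 2 * ((lam * (D + 1) + (D - 1)) * (lam * (D + 1) - (D - 1))) * (1 - lam) ^ 3 :=
        mul_le_mul_of_nonneg_right hkey2 (by positivity)
      have g6 : Δ ^ 2 * ((1 - lam) ^ 2) ^ 2 * (1 + lam) ≤ (2 * (1 + lam)) ^ 2 * (1 + lam) := by
        nlinarith [g5, t2, mul_nonneg (by positivity : (0:ℝ) ≤ 4 * (1 + lam) ^ 3)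
          (by linarith : (0:ℝ) ≤ 1 - lam)]
      exact le_of_mul_le_mul_right g6 (by linarith : (0:ℝ) < 1 + lam)
  rw [abs_le]
  constructor
  · rw [neg_le, le_div_iff₀ (by positivity : (0:ℝ) < (1 - lam) ^ 2)]
    nlinarith [hsq, sq_nonneg (Δ * (1 - lam) ^ 2 - 2 * (1 + lam)),
      sq_nonneg (Δ * (1 - lam) ^ 2 + 2 * (1 + lam))]
  · rw [le_div_iff₀ (by positivity : (0:ℝ) < (1 - lam) ^ 2)]
    nlinarith [hsq, sq_nonneg (Δ * (1 - lam) ^ 2 - 2 * (1 + lam)),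
      sq_nonneg (Δ * (1 - lam) ^ 2 + 2 * (1 + lam))]
end

section
/- Let f be a C² function with Df > 0. For distinct θ₁ < θ₂ < θ₃ converging to θ with ε = (θ₃−θ₁)/2 → 0, define ρ_ε² = (|e^{if(θ₃)} − e^{if(θ₂)}|²/|e^{iθ₃} − e^{iθ₂}|²)·(|e^{iθ₂} − e^{iθ₁}|²/|e^{if(θ₂)} − e^{if(θ₁)}|²). Then (1 − ρ_ε)/ε → −D²f(θ)/Df(θ). -/
open Real Filter Set


open Filter

lemma abs_exp_sub_sq (x y : ℝ) :
    ‖Complex.exp (x * Complex.I) - Complex.exp (y * Complex.I)‖ ^ 2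
      = 4 * Real.sin ((x - y) / 2) ^ 2 := by
  rw [Complex.sq_norm, Complex.normSq_apply]
  simp only [Complex.sub_re, Complex.sub_im, Complex.exp_ofReal_mul_I_re,
    Complex.exp_ofReal_mul_I_im]
  have h := Real.cos_two_mul ((x - y)/2)
  have h2 := Real.sin_sq_add_cos_sq ((x - y)/2)
  have h3 : 2 * ((x - y)/2) = x - y := by ring
  rw [h3] at h
  have hc : Real.cos (x - y) = Real.cos x * Real.cos y + Real.sin x * Real.sin y :=
    Real.cos_sub x y
  have hx := Real.sin_sq_add_cos_sq x
  have hy := Real.sin_sq_add_cos_sq y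
  nlinarith

lemma slope_midpoint (f : ℝ → ℝ) (hd1 : Differentiable ℝ f)
    (hd2 : Differentiable ℝ (deriv f)) {u v K : ℝ} (huv : u < v)
    (hK : ∀ x ∈ Set.Icc u v, |deriv (deriv f) x - deriv (deriv f) ((u+v)/2)| ≤ K) :
    |(f v - f u)/(v-u) - deriv f ((u+v)/2)| ≤ K * (v-u) / 2 := by
  set m := (u+v)/2 with hm
  set c1 := deriv f m with hc1
  set c2 := deriv (deriv f) m with hc2
  have hmem : m ∈ Set.Icc u v := by constructor <;> [simp [hm]; simp [hm]] <;> linarith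
  have hconv : Convex ℝ (Set.Icc u v) := convex_Icc u v
  -- step 1 : bound deriv f x - c1 - c2*(x-m)
  have step1 : ∀ x ∈ Set.Icc u v, |deriv f x - c1 - c2 * (x - m)| ≤ K * ((v-u)/2) := by
    intro x hx
    have hder : ∀ y ∈ Set.Icc u v,
        HasDerivWithinAt (fun z => deriv f z - c2 * z)
          (deriv (deriv f) y - c2) (Set.Icc u v) y := by
      intro y _
      have h := ((hd2 y).hasDerivAt.sub ((hasDerivAt_id' y).const_mul c2)).hasDerivWithinAt (s := Set.Icc u v)
      rw [mul_one] at h; exact h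
    have hbd : ∀ y ∈ Set.Icc u v, ‖deriv (deriv f) y - c2‖ ≤ K := by
      intro y hy; exact hK y hy
    have := hconv.norm_image_sub_le_of_norm_hasDerivWithin_le hder hbd hmem hx
    have hxm : |x - m| ≤ (v-u)/2 := by
      rw [abs_le]; rcases hx with ⟨h1, h2⟩; constructor <;> [simp [hm]; simp [hm]] <;> linarith
    have hK0 : 0 ≤ K := le_trans (abs_nonneg _) (hK m hmem)
    calc |deriv f x - c1 - c2 * (x - m)|
        = ‖(deriv f x - c2 * x) - (deriv f m - c2 * m)‖ := by
          rw [Real.norm_eq_abs, ← hc1]; congr 1; ring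
      _ ≤ K * ‖x - m‖ := this
      _ ≤ K * ((v-u)/2) := by
          rw [Real.norm_eq_abs]; exact mul_le_mul_of_nonneg_left hxm hK0
  -- step 2 : MVT inequality for g
  have step2 : ∀ y ∈ Set.Icc u v,
      HasDerivWithinAt (fun z => f z - c1 * z - c2 * (z - m)^2 / 2)
        (deriv f y - c1 - c2 * (y - m)) (Set.Icc u v) y := by
    intro y _
    have h1 : HasDerivAt (fun z => f z - c1 * z - c2 * (z - m)^2 / 2)
        (deriv f y - c1 * 1 - c2 * (2 * (y - m)^1 * 1) / 2) y := by
      exact (((hd1 y).hasDerivAt.sub ((hasDerivAt_id y).const_mul c1)).sub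
          ((((hasDerivAt_id y).sub_const m).pow 2).const_mul c2 |>.div_const 2))
    have : deriv f y - c1 * 1 - c2 * (2 * (y - m)^1 * 1) / 2
        = deriv f y - c1 - c2 * (y - m) := by ring
    rw [this] at h1
    exact h1.hasDerivWithinAt
  have key := hconv.norm_image_sub_le_of_norm_hasDerivWithin_le step2
    (fun y hy => by rw [Real.norm_eq_abs]; exact step1 y hy)
    (Set.left_mem_Icc.2 huv.le) (Set.right_mem_Icc.2 huv.le)
  have hvm : (v - m)^2 = (u - m)^2 := by rw [hm]; ring
  have hgl : (f v - c1 * v - c2 * (v - m)^2 / 2) - (f u - c1 * u - c2 * (u - m)^2 / 2)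
      = f v - f u - c1 * (v - u) := by rw [hvm]; ring
  rw [Real.norm_eq_abs, Real.norm_eq_abs, hgl] at key
  have hvu : 0 < v - u := by linarith
  have habs : |v - u| = v - u := abs_of_pos hvu
  rw [habs] at key
  have heq : (f v - f u)/(v-u) - c1 = (f v - f u - c1 * (v-u))/(v-u) := by
    field_simp
  rw [heq, abs_div, abs_of_pos hvu, div_le_iff₀ hvu]
  calc |f v - f u - c1 * (v-u)| ≤ K * ((v-u)/2) * (v-u) := key
    _ = K * (v - u) / 2 * (v - u) := by ring

lemma sinc_le_one {x : ℝ} (hx : 0 < x) : Real.sin x / x ≤ 1 :=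
  (div_le_one hx).2 (Real.sin_lt hx).le

lemma sinc_lower {x : ℝ} (hx : 0 < x) (h1 : x ≤ 1) : 1 - x^2/4 ≤ Real.sin x / x := by
  have h := Real.sin_gt_sub_cube hx
  rw [le_div_iff₀ hx]
  nlinarith [pow_pos hx 3]

lemma sinc_tendsto {u : ℕ → ℝ} (hpos : ∀ n, 0 < u n) (h0 : Tendsto u atTop (nhds 0)) :
    Tendsto (fun n => Real.sin (u n) / u n) atTop (nhds 1) := by
  have hup : ∀ᶠ n in atTop, u n ≤ 1 :=
    h0.eventually (eventually_le_nhds (by norm_num : (0:ℝ) < 1))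
  have hlow : Tendsto (fun n => 1 - (u n)^2/4) atTop (nhds 1) := by
    have : Tendsto (fun n => (u n)^2/4) atTop (nhds 0) := by
      have := (h0.pow 2).div_const 4
      simpa using this
    simpa using (tendsto_const_nhds (x := (1:ℝ))).sub this
  refine tendsto_of_tendsto_of_tendsto_of_le_of_le' hlow tendsto_const_nhds ?_ ?_
  · filter_upwards [hup] with n hn
    exact sinc_lower (hpos n) hn
  · filter_upwards with n
    exact sinc_le_one (hpos n)

lemma abs_prod_sub_prod {p q r s : ℝ} (hp0 : 0 ≤ p) (hp1 : p ≤ 1) (hq0 : 0 ≤ q) (hq1 : q ≤ 1)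
    (hr0 : 0 ≤ r) (hr1 : r ≤ 1) (hs0 : 0 ≤ s) (hs1 : s ≤ 1) :
    |p*q - r*s| ≤ (1-p)+(1-q)+(1-r)+(1-s) := by
  rw [abs_le]; constructor <;> nlinarith

lemma rho_decomp {fa fb fc a b c : ℝ} (hab : a < b) (hbc : b < c) (hfab : fa < fb)
    (hfbc : fb < fc) (hsB : Real.sin ((c-b)/2) ≠ 0) (hsF1 : Real.sin ((fb-fa)/2) ≠ 0) :
    (Real.sin ((fc-fb)/2) * Real.sin ((b-a)/2)) / (Real.sin ((c-b)/2) * Real.sin ((fb-fa)/2))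
      = (((fc-fb)/(c-b)) / ((fb-fa)/(b-a))) *
        (((Real.sin ((fc-fb)/2) / ((fc-fb)/2)) * (Real.sin ((b-a)/2) / ((b-a)/2))) /
          ((Real.sin ((c-b)/2) / ((c-b)/2)) * (Real.sin ((fb-fa)/2) / ((fb-fa)/2)))) := by
  have h1 : b - a ≠ 0 := by linarith
  have h2 : c - b ≠ 0 := by linarith
  have h3 : fb - fa ≠ 0 := by linarith
  have h4 : fc - fb ≠ 0 := by linarith
  generalize Real.sin ((fc-fb)/2) = u2 at *
  generalize Real.sin ((b-a)/2) = uA at *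
  generalize Real.sin ((c-b)/2) = uB at *
  generalize Real.sin ((fb-fa)/2) = u1 at *
  field_simp

lemma div_decomp {q t e : ℝ} (he : e ≠ 0) : (1 - q*t)/e = ((1-q)/e)*t + (1-t)/e := by
  field_simp
  ring


set_option maxHeartbeats 2000000 in
/-- for a lift `f` of a C² circle diffeomorphism and triples
`θ₁ < θ₂ < θ₃` converging to `θ`, with `ε = (θ₃-θ₁)/2` and `ρ_ε` the modulus of the
cross-ratio-type quantity `τ`, one has `(1-ρ_ε)/ε → -D²f(θ)/Df(θ)`. -/
theorem rho_limit (f : ℝ → ℝ) (hf : ContDiff ℝ 2 f) (hf' : ∀ x, 0 < deriv f x)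
    (hper : ∀ x, f (x + 2 * Real.pi) = f x + 2 * Real.pi)
    (θ : ℝ) (t₁ t₂ t₃ : ℕ → ℝ)
    (hord : ∀ n, t₁ n < t₂ n ∧ t₂ n < t₃ n) (hsp : ∀ n, t₃ n - t₁ n < 2 * Real.pi)
    (h1 : Tendsto t₁ atTop (nhds θ)) (h3 : Tendsto t₃ atTop (nhds θ))
    (ρ : ℕ → ℝ)
    (hρ : ∀ n, ρ n = Real.sqrt
      ((‖Complex.exp (f (t₃ n) * Complex.I) - Complex.exp (f (t₂ n) * Complex.I)‖ ^ 2 /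
          ‖Complex.exp (t₃ n * Complex.I) - Complex.exp (t₂ n * Complex.I)‖ ^ 2) *
        (‖Complex.exp (t₂ n * Complex.I) - Complex.exp (t₁ n * Complex.I)‖ ^ 2 /
          ‖Complex.exp (f (t₂ n) * Complex.I) - Complex.exp (f (t₁ n) * Complex.I)‖ ^ 2))) :
    Tendsto (fun n => (1 - ρ n) / ((t₃ n - t₁ n) / 2))
      atTop (nhds (-(deriv (deriv f) θ) / deriv f θ)) := by
  -- regularity facts
  have hfd : Differentiable ℝ f := hf.differentiable two_ne_zero
  have hf2 : ContDiff ℝ 1 (deriv f) := by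
    have h2 : ((2 : WithTop ℕ∞)) = 1 + 1 := by norm_num
    rw [h2] at hf
    exact (contDiff_succ_iff_deriv.mp hf).2.2
  have hd2 : Differentiable ℝ (deriv f) := hf2.differentiable one_ne_zero
  have hcont2 : Continuous (deriv (deriv f)) := hf2.continuous_deriv le_rfl
  have hcont1 : Continuous (deriv f) := hf.continuous_deriv one_le_two
  have hmono : StrictMono f := strictMono_of_deriv_pos hf'
  -- sequences
  set ε : ℕ → ℝ := fun n => (t₃ n - t₁ n)/2 with hε
  set A : ℕ → ℝ := fun n => (t₂ n - t₁ n)/2 with hA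
  set B : ℕ → ℝ := fun n => (t₃ n - t₂ n)/2 with hB
  set F1 : ℕ → ℝ := fun n => (f (t₂ n) - f (t₁ n))/2 with hF1
  set F2 : ℕ → ℝ := fun n => (f (t₃ n) - f (t₂ n))/2 with hF2
  set s1 : ℕ → ℝ := fun n => (f (t₂ n) - f (t₁ n))/(t₂ n - t₁ n) with hs1
  set s2 : ℕ → ℝ := fun n => (f (t₃ n) - f (t₂ n))/(t₃ n - t₂ n) with hs2
  set T : ℕ → ℝ := fun n =>
    ((Real.sin (F2 n) / F2 n) * (Real.sin (A n) / A n)) /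
      ((Real.sin (B n) / B n) * (Real.sin (F1 n) / F1 n)) with hT
  -- pointwise defining equations
  have hεe : ∀ n, ε n = (t₃ n - t₁ n)/2 := fun n => rfl
  have hAe : ∀ n, A n = (t₂ n - t₁ n)/2 := fun n => rfl
  have hBe : ∀ n, B n = (t₃ n - t₂ n)/2 := fun n => rfl
  have hF1e : ∀ n, F1 n = (f (t₂ n) - f (t₁ n))/2 := fun n => rfl
  have hF2e : ∀ n, F2 n = (f (t₃ n) - f (t₂ n))/2 := fun n => rfl
  have hs1e : ∀ n, s1 n = (f (t₂ n) - f (t₁ n))/(t₂ n - t₁ n) := fun n => rfl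
  have hs2e : ∀ n, s2 n = (f (t₃ n) - f (t₂ n))/(t₃ n - t₂ n) := fun n => rfl
  have hTe : ∀ n, T n =
      ((Real.sin (F2 n) / F2 n) * (Real.sin (A n) / A n)) /
        ((Real.sin (B n) / B n) * (Real.sin (F1 n) / F1 n)) := fun n => rfl
  -- positivity facts
  have h13 : ∀ n, t₁ n < t₃ n := fun n => (hord n).1.trans (hord n).2
  have hεpos : ∀ n, 0 < ε n := fun n => by rw [hεe]; linarith [h13 n]
  have hεπ : ∀ n, ε n < π := fun n => by
    rw [hεe]; have := hsp n; have := Real.pi_pos; linarith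
  have hApos : ∀ n, 0 < A n := fun n => by rw [hAe]; linarith [(hord n).1]
  have hBpos : ∀ n, 0 < B n := fun n => by rw [hBe]; linarith [(hord n).2]
  have hAε : ∀ n, A n ≤ ε n := fun n => by rw [hAe, hεe]; linarith [(hord n).2]
  have hBε : ∀ n, B n ≤ ε n := fun n => by rw [hBe, hεe]; linarith [(hord n).1]
  have hfab : ∀ n, f (t₁ n) < f (t₂ n) := fun n => hmono (hord n).1
  have hfbc : ∀ n, f (t₂ n) < f (t₃ n) := fun n => hmono (hord n).2
  have hfspan : ∀ n, f (t₃ n) - f (t₁ n) < 2 * π := fun n => by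
    have h := hmono (show t₃ n < t₁ n + 2 * π by linarith [hsp n])
    rw [hper (t₁ n)] at h; linarith
  have hF1pos : ∀ n, 0 < F1 n := fun n => by rw [hF1e]; linarith [hfab n]
  have hF2pos : ∀ n, 0 < F2 n := fun n => by rw [hF2e]; linarith [hfbc n]
  have hF1π : ∀ n, F1 n < π := fun n => by
    rw [hF1e]; linarith [hfspan n, hfbc n, Real.pi_pos]
  have hF2π : ∀ n, F2 n < π := fun n => by
    rw [hF2e]; linarith [hfspan n, hfab n, Real.pi_pos]
  have hsinA : ∀ n, 0 < Real.sin (A n) := fun n =>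
    Real.sin_pos_of_pos_of_lt_pi (hApos n) (lt_of_le_of_lt (hAε n) (hεπ n))
  have hsinB : ∀ n, 0 < Real.sin (B n) := fun n =>
    Real.sin_pos_of_pos_of_lt_pi (hBpos n) (lt_of_le_of_lt (hBε n) (hεπ n))
  have hsinF1 : ∀ n, 0 < Real.sin (F1 n) := fun n =>
    Real.sin_pos_of_pos_of_lt_pi (hF1pos n) (hF1π n)
  have hsinF2 : ∀ n, 0 < Real.sin (F2 n) := fun n =>
    Real.sin_pos_of_pos_of_lt_pi (hF2pos n) (hF2π n)
  have hs1pos : ∀ n, 0 < s1 n := fun n => by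
    rw [hs1e]; exact div_pos (by linarith [hfab n]) (by linarith [(hord n).1])
  have hs2pos : ∀ n, 0 < s2 n := fun n => by
    rw [hs2e]; exact div_pos (by linarith [hfbc n]) (by linarith [(hord n).2])
  -- ρ formula
  have hρ' : ∀ n, ρ n = (Real.sin (F2 n) * Real.sin (A n)) /
      (Real.sin (B n) * Real.sin (F1 n)) := by
    intro n
    rw [hρ n, abs_exp_sub_sq, abs_exp_sub_sq, abs_exp_sub_sq, abs_exp_sub_sq]
    have harg : (4 * Real.sin ((f (t₃ n) - f (t₂ n)) / 2) ^ 2 /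
          (4 * Real.sin ((t₃ n - t₂ n) / 2) ^ 2)) *
        (4 * Real.sin ((t₂ n - t₁ n) / 2) ^ 2 /
          (4 * Real.sin ((f (t₂ n) - f (t₁ n)) / 2) ^ 2))
        = ((Real.sin (F2 n) * Real.sin (A n)) / (Real.sin (B n) * Real.sin (F1 n)))^2 := by
      show (4 * Real.sin (F2 n) ^ 2 / (4 * Real.sin (B n) ^ 2)) *
        (4 * Real.sin (A n) ^ 2 / (4 * Real.sin (F1 n) ^ 2)) = _
      have b1 := (hsinB n).ne'
      have b2 := (hsinF1 n).ne'
      field_simp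
    rw [harg, Real.sqrt_sq]
    exact le_of_lt (div_pos (mul_pos (hsinF2 n) (hsinA n)) (mul_pos (hsinB n) (hsinF1 n)))
  -- limits of points
  have h2 : Tendsto t₂ atTop (nhds θ) :=
    tendsto_of_tendsto_of_tendsto_of_le_of_le h1 h3
      (fun n => (hord n).1.le) (fun n => (hord n).2.le)
  have hεto0 : Tendsto ε atTop (nhds 0) := by
    have h := (h3.sub h1).div_const 2
    rw [sub_self, zero_div] at h
    exact h.congr (fun n => (hεe n).symm)
  -- MVT for slopes
  have hmvt1 : ∀ n, ∃ c ∈ Set.Ioo (t₁ n) (t₂ n), deriv f c = s1 n := fun n => by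
    rw [hs1e]
    exact exists_deriv_eq_slope f (hord n).1 hfd.continuous.continuousOn hfd.differentiableOn
  choose ξ1 hξ1mem hξ1 using hmvt1
  have hmvt2 : ∀ n, ∃ c ∈ Set.Ioo (t₂ n) (t₃ n), deriv f c = s2 n := fun n => by
    rw [hs2e]
    exact exists_deriv_eq_slope f (hord n).2 hfd.continuous.continuousOn hfd.differentiableOn
  choose ξ2 hξ2mem hξ2 using hmvt2
  have hξ1to : Tendsto ξ1 atTop (nhds θ) :=
    tendsto_of_tendsto_of_tendsto_of_le_of_le h1 h2
      (fun n => (hξ1mem n).1.le) (fun n => (hξ1mem n).2.le)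
  have hξ2to : Tendsto ξ2 atTop (nhds θ) :=
    tendsto_of_tendsto_of_tendsto_of_le_of_le h2 h3
      (fun n => (hξ2mem n).1.le) (fun n => (hξ2mem n).2.le)
  have hs1to : Tendsto s1 atTop (nhds (deriv f θ)) :=
    ((hcont1.tendsto θ).comp hξ1to).congr (fun n => hξ1 n)
  have hs2to : Tendsto s2 atTop (nhds (deriv f θ)) :=
    ((hcont1.tendsto θ).comp hξ2to).congr (fun n => hξ2 n)
  -- slope equations for later use, then make everything opaque
  have hF1eq : ∀ n, F1 n = s1 n * A n := fun n => by
    have hne : t₂ n - t₁ n ≠ 0 := by linarith [(hord n).1]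
    rw [hF1e, hs1e, hAe]
    field_simp
  have hF2eq : ∀ n, F2 n = s2 n * B n := fun n => by
    have hne : t₃ n - t₂ n ≠ 0 := by linarith [(hord n).2]
    rw [hF2e, hs2e, hBe]
    field_simp
  clear_value ε A B F1 F2 s1 s2 T
  -- MVT for deriv f on midpoints
  have hm12 : ∀ n, (t₁ n + t₂ n)/2 < (t₂ n + t₃ n)/2 := fun n => by
    linarith [(hord n).1, (hord n).2]
  have hmvt3 : ∀ n, ∃ c ∈ Set.Ioo ((t₁ n + t₂ n)/2) ((t₂ n + t₃ n)/2),
      deriv (deriv f) c = (deriv f ((t₂ n + t₃ n)/2) - deriv f ((t₁ n + t₂ n)/2)) /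
        ((t₂ n + t₃ n)/2 - (t₁ n + t₂ n)/2) := fun n =>
    exists_deriv_eq_slope (deriv f) (hm12 n) hcont1.continuousOn hd2.differentiableOn
  choose η hηmem hη using hmvt3
  have hηto : Tendsto η atTop (nhds θ) := by
    refine tendsto_of_tendsto_of_tendsto_of_le_of_le h1 h3 (fun n => ?_) (fun n => ?_)
    · have := (hηmem n).1; linarith [(hord n).1]
    · have := (hηmem n).2; linarith [(hord n).2]
  have hηcomp : Tendsto (fun n => deriv (deriv f) (η n)) atTop
      (nhds (deriv (deriv f) θ)) := (hcont2.tendsto θ).comp hηto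
  -- error term tends to zero
  have hEto0 : Tendsto (fun n => (s2 n - s1 n)/ε n - deriv (deriv f) (η n)) atTop
      (nhds 0) := by
    rw [Metric.tendsto_nhds]
    intro δ hδ
    obtain ⟨r, hr0, hball⟩ : ∃ r > 0, ∀ x : ℝ, |x - θ| < r →
        |deriv (deriv f) x - deriv (deriv f) θ| < δ/8 := by
      obtain ⟨r, hr0, h⟩ := Metric.continuousAt_iff.mp hcont2.continuousAt (δ/8)
        (by linarith)
      exact ⟨r, hr0, fun x hx => by
        have := h (show dist x θ < r by rwa [Real.dist_eq])
        rwa [Real.dist_eq] at this⟩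
    have hev1 : ∀ᶠ n in atTop, |t₁ n - θ| < r := by
      have := Metric.tendsto_nhds.mp h1 r hr0
      simpa [Real.dist_eq] using this
    have hev3 : ∀ᶠ n in atTop, |t₃ n - θ| < r := by
      have := Metric.tendsto_nhds.mp h3 r hr0
      simpa [Real.dist_eq] using this
    filter_upwards [hev1, hev3] with n hn1 hn3
    have hn1' := abs_lt.mp hn1
    have hn3' := abs_lt.mp hn3
    have hin : ∀ x, t₁ n ≤ x → x ≤ t₃ n → |x - θ| < r := fun x hx1 hx2 => by
      rw [abs_lt]; constructor <;> linarith [hn1'.1, hn3'.2]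
    have hincc : ∀ x y, t₁ n ≤ x → x ≤ t₃ n → t₁ n ≤ y → y ≤ t₃ n →
        |deriv (deriv f) x - deriv (deriv f) y| ≤ δ/4 := fun x y hx1 hx2 hy1 hy2 => by
      have b1 := hball x (hin x hx1 hx2)
      have b2 := hball y (hin y hy1 hy2)
      calc |deriv (deriv f) x - deriv (deriv f) y|
          ≤ |deriv (deriv f) x - deriv (deriv f) θ| +
            |deriv (deriv f) θ - deriv (deriv f) y| := abs_sub_le _ _ _
        _ ≤ δ/4 := by rw [abs_sub_comm (deriv (deriv f) θ)]; linarith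
    -- apply slope_midpoint on both subintervals
    have hK1 : ∀ x ∈ Set.Icc (t₁ n) (t₂ n),
        |deriv (deriv f) x - deriv (deriv f) ((t₁ n + t₂ n)/2)| ≤ δ/4 := fun x hx => by
      rcases hx with ⟨hx1, hx2⟩
      exact hincc x _ hx1 (by linarith [(hord n).2])
        (by linarith [(hord n).1]) (by linarith [(hord n).1, (hord n).2])
    have hK2 : ∀ x ∈ Set.Icc (t₂ n) (t₃ n),
        |deriv (deriv f) x - deriv (deriv f) ((t₂ n + t₃ n)/2)| ≤ δ/4 := fun x hx => by
      rcases hx with ⟨hx1, hx2⟩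
      exact hincc x _ (by linarith [(hord n).1]) hx2
        (by linarith [(hord n).1, (hord n).2]) (by linarith [(hord n).2])
    have he1 := slope_midpoint f hfd hd2 (hord n).1 hK1
    have he2 := slope_midpoint f hfd hd2 (hord n).2 hK2
    rw [← hs1e n] at he1
    rw [← hs2e n] at he2
    have hεn : ε n ≠ 0 := (hεpos n).ne'
    have hεm : (t₂ n + t₃ n)/2 - (t₁ n + t₂ n)/2 = ε n := by rw [hεe n]; ring
    have hdm : deriv f ((t₂ n + t₃ n)/2) - deriv f ((t₁ n + t₂ n)/2)
        = deriv (deriv f) (η n) * ε n := by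
      rw [hη n, hεm]
      exact (div_mul_cancel₀ _ hεn).symm
    have hsplit : (s2 n - s1 n)/ε n - deriv (deriv f) (η n)
        = ((s2 n - deriv f ((t₂ n + t₃ n)/2)) - (s1 n - deriv f ((t₁ n + t₂ n)/2)))/ε n := by
      rw [eq_div_iff hεn]
      have : (s2 n - deriv f ((t₂ n + t₃ n)/2)) - (s1 n - deriv f ((t₁ n + t₂ n)/2))
          = (s2 n - s1 n) - deriv (deriv f) (η n) * ε n := by
        rw [← hdm]; ring
      rw [this]
      field_simp
    rw [Real.dist_eq, sub_zero, hsplit, abs_div, abs_of_pos (hεpos n),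
      div_lt_iff₀ (hεpos n)]
    have htri : |(s2 n - deriv f ((t₂ n + t₃ n)/2)) - (s1 n - deriv f ((t₁ n + t₂ n)/2))|
        ≤ |s2 n - deriv f ((t₂ n + t₃ n)/2)| + |s1 n - deriv f ((t₁ n + t₂ n)/2)| :=
      abs_sub _ _
    have hb1 : (t₂ n - t₁ n) ≤ 2 * ε n := by rw [hεe]; linarith [(hord n).2]
    have hb2 : (t₃ n - t₂ n) ≤ 2 * ε n := by rw [hεe]; linarith [(hord n).1]
    nlinarith [hεpos n, he1, he2, htri]
  have hsdiff : Tendsto (fun n => (s2 n - s1 n) / ε n) atTop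
      (nhds (deriv (deriv f) θ)) := by
    have h := hηcomp.add hEto0
    rw [add_zero] at h
    exact h.congr (fun n => by ring)
  -- main slope-ratio limit L1
  have hf'θ : (0:ℝ) < deriv f θ := hf' θ
  have L1 : Tendsto (fun n => (1 - s2 n / s1 n) / ε n) atTop
      (nhds (-(deriv (deriv f) θ) / deriv f θ)) := by
    have h := (hsdiff.div hs1to hf'θ.ne').neg
    rw [show -(deriv (deriv f) θ / deriv f θ) = -(deriv (deriv f) θ) / deriv f θ from
      (neg_div _ _).symm] at h
    refine h.congr (fun n => ?_)
    show -((s2 n - s1 n)/ε n/s1 n) = (1 - s2 n/s1 n)/ε n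
    have h1n : s1 n ≠ 0 := (hs1pos n).ne'
    have e1 : 1 - s2 n / s1 n = (s1 n - s2 n)/s1 n := by
      rw [sub_div, div_self h1n]
    have e2 : -((s2 n - s1 n)/ε n/s1 n) = (s1 n - s2 n)/(s1 n * ε n) := by
      rw [div_div, ← neg_div, neg_sub, mul_comm]
    rw [e2, e1, div_div]
  -- sinc limits
  have hAto0 : Tendsto A atTop (nhds 0) :=
    squeeze_zero (fun n => (hApos n).le) hAε hεto0
  have hBto0 : Tendsto B atTop (nhds 0) :=
    squeeze_zero (fun n => (hBpos n).le) hBε hεto0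
  have hF1to0 : Tendsto F1 atTop (nhds 0) := by
    have h := hs1to.mul hAto0
    rw [mul_zero] at h
    exact h.congr (fun n => (hF1eq n).symm)
  have hF2to0 : Tendsto F2 atTop (nhds 0) := by
    have h := hs2to.mul hBto0
    rw [mul_zero] at h
    exact h.congr (fun n => (hF2eq n).symm)
  have hscA := sinc_tendsto hApos hAto0
  have hscB := sinc_tendsto hBpos hBto0
  have hscF1 := sinc_tendsto hF1pos hF1to0
  have hscF2 := sinc_tendsto hF2pos hF2to0
  have hTto1 : Tendsto T atTop (nhds 1) := by
    have h := (hscF2.mul hscA).div (hscB.mul hscF1) (by norm_num)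
    rw [show ((1:ℝ) * 1 / (1 * 1)) = 1 by norm_num] at h
    exact h.congr (fun n => (hTe n).symm)
  -- L3 : (1 - T)/ε → 0
  have L3 : Tendsto (fun n => (1 - T n) / ε n) atTop (nhds 0) := by
    set M : ℝ := max (deriv f θ + 1) 1 with hM
    have hM1 : (1:ℝ) ≤ M := le_max_right _ _
    have hevs1 : ∀ᶠ n in atTop, s1 n ≤ M := by
      filter_upwards [hs1to.eventually (eventually_le_nhds (lt_add_one _))] with n hn
      exact hn.trans (le_max_left _ _)
    have hevs2 : ∀ᶠ n in atTop, s2 n ≤ M := by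
      filter_upwards [hs2to.eventually (eventually_le_nhds (lt_add_one _))] with n hn
      exact hn.trans (le_max_left _ _)
    have hone : (0:ℝ) < 1 := one_pos
    have hevA : ∀ᶠ n in atTop, A n ≤ 1 := hAto0.eventually (eventually_le_nhds hone)
    have hevB : ∀ᶠ n in atTop, B n ≤ 1 := hBto0.eventually (eventually_le_nhds hone)
    have hevF1 : ∀ᶠ n in atTop, F1 n ≤ 1 := hF1to0.eventually (eventually_le_nhds hone)
    have hevF2 : ∀ᶠ n in atTop, F2 n ≤ 1 := hF2to0.eventually (eventually_le_nhds hone)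
    have hNbound : ∀ᶠ n in atTop,
        ‖((Real.sin (B n)/B n) * (Real.sin (F1 n)/F1 n) -
            (Real.sin (F2 n)/F2 n) * (Real.sin (A n)/A n)) / ε n‖
          ≤ (2 + 2*M^2)/4 * ε n := by
      filter_upwards [hevs1, hevs2, hevA, hevB, hevF1, hevF2]
        with n hsM1 hsM2 hA1 hB1 hF11 hF21
      have bA := sinc_lower (hApos n) hA1
      have bB := sinc_lower (hBpos n) hB1
      have bF1 := sinc_lower (hF1pos n) hF11
      have bF2 := sinc_lower (hF2pos n) hF21
      have uA := sinc_le_one (hApos n)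
      have uB := sinc_le_one (hBpos n)
      have uF1 := sinc_le_one (hF1pos n)
      have uF2 := sinc_le_one (hF2pos n)
      have pA := (div_pos (hsinA n) (hApos n)).le
      have pB := (div_pos (hsinB n) (hBpos n)).le
      have pF1 := (div_pos (hsinF1 n) (hF1pos n)).le
      have pF2 := (div_pos (hsinF2 n) (hF2pos n)).le
      have habs := abs_prod_sub_prod pB uB pF1 uF1 pF2 uF2 pA uA
      have hF1M : F1 n ≤ M * ε n := by
        rw [hF1eq n]
        exact mul_le_mul hsM1 (hAε n) (hApos n).le (by linarith)
      have hF2M : F2 n ≤ M * ε n := by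
        rw [hF2eq n]
        exact mul_le_mul hsM2 (hBε n) (hBpos n).le (by linarith)
      have c1 : 1 - Real.sin (B n)/B n ≤ ε n^2/4 := by
        nlinarith [hBε n, hBpos n]
      have c2 : 1 - Real.sin (F1 n)/F1 n ≤ (M * ε n)^2/4 := by
        nlinarith [hF1pos n]
      have c3 : 1 - Real.sin (F2 n)/F2 n ≤ (M * ε n)^2/4 := by
        nlinarith [hF2pos n]
      have c4 : 1 - Real.sin (A n)/A n ≤ ε n^2/4 := by
        nlinarith [hAε n, hApos n]
      rw [Real.norm_eq_abs, abs_div, abs_of_pos (hεpos n), div_le_iff₀ (hεpos n)]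
      calc |(Real.sin (B n)/B n) * (Real.sin (F1 n)/F1 n) -
            (Real.sin (F2 n)/F2 n) * (Real.sin (A n)/A n)|
          ≤ ε n^2/4 + (M * ε n)^2/4 + (M * ε n)^2/4 + ε n^2/4 := by linarith
        _ = (2 + 2*M^2)/4 * ε n * ε n := by ring
    have hg : Tendsto (fun n => (2 + 2*M^2)/4 * ε n) atTop (nhds 0) := by
      have h := hεto0.const_mul ((2 + 2*M^2)/4)
      rwa [mul_zero] at h
    have hNto0 := squeeze_zero_norm' hNbound hg
    have hDto : Tendsto (fun n => (Real.sin (B n)/B n) * (Real.sin (F1 n)/F1 n))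
        atTop (nhds 1) := by
      have h := hscB.mul hscF1
      rwa [mul_one] at h
    have h := hNto0.div hDto one_ne_zero
    rw [zero_div] at h
    refine h.congr (fun n => ?_)
    show ((Real.sin (B n)/B n * (Real.sin (F1 n)/F1 n) -
        Real.sin (F2 n)/F2 n * (Real.sin (A n)/A n)) / ε n) /
        ((Real.sin (B n)/B n) * (Real.sin (F1 n)/F1 n)) = (1 - T n)/ε n
    rw [hTe n]
    have hDne : (Real.sin (B n)/B n) * (Real.sin (F1 n)/F1 n) ≠ 0 :=
      (mul_pos (div_pos (hsinB n) (hBpos n)) (div_pos (hsinF1 n) (hF1pos n))).ne'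
    have e1 : 1 - (Real.sin (F2 n)/F2 n * (Real.sin (A n)/A n)) /
        ((Real.sin (B n)/B n) * (Real.sin (F1 n)/F1 n))
        = ((Real.sin (B n)/B n) * (Real.sin (F1 n)/F1 n) -
            (Real.sin (F2 n)/F2 n * (Real.sin (A n)/A n))) /
          ((Real.sin (B n)/B n) * (Real.sin (F1 n)/F1 n)) := by
      rw [sub_div, div_self hDne]
    rw [e1, div_div, div_div, mul_comm (ε n)]
  -- final assembly
  have key : ∀ n, (1 - ρ n) / ε n = ((1 - s2 n / s1 n) / ε n) * T n + (1 - T n) / ε n := by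
    intro n
    have hdecomp : ρ n = (s2 n / s1 n) * T n := by
      rw [hρ' n, hTe n, hs1e n, hs2e n, hF1e n, hF2e n, hAe n, hBe n]
      exact rho_decomp (hord n).1 (hord n).2 (hfab n) (hfbc n)
        (by rw [← hBe n]; exact (hsinB n).ne') (by rw [← hF1e n]; exact (hsinF1 n).ne')
    rw [hdecomp]
    exact div_decomp (hεpos n).ne'
  have hfinal := (L1.mul hTto1).add L3
  rw [mul_one, add_zero] at hfinal
  have step1 : Tendsto (fun n => (1 - ρ n)/ε n) atTop
      (nhds (-(deriv (deriv f) θ)/deriv f θ)) := hfinal.congr (fun n => (key n).symm)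
  exact step1.congr (fun n => by rw [hεe n])
end

section
/- Continuity of the enlarged projective cocycle on the diagonal: if f is a C² circle diffeomorphism, then as three distinct cyclically ordered points θ₁, θ₂, θ₃ all converge to θ, the modulus |σ_{(θ₁,θ₂,θ₃)}| of the parameter of the interpolating Möbius map M_{f,(θ₁,θ₂,θ₃)} converges to sqrt((Df(θ)²(Df(θ)−1)² + D²f(θ)²)/(Df(θ)²(Df(θ)+1)² + D²f(θ)²)), the modulus of the parameter of the projective derivative P_{f,θ}. -/
open Filter intervalIntegral Complex

noncomputable section

namespace EnlargedAux

lemma ftc_rep {h h' : ℝ → ℂ} (hd : ∀ x, HasDerivAt h (h' x) x) (hc : Continuous h')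
    (x y : ℝ) :
    h y - h x = ∫ t in (0:ℝ)..1, (y - x) • h' (x + t * (y - x)) := by
  have key : ∀ t ∈ Set.uIcc (0:ℝ) 1,
      HasDerivAt (fun s => h (x + s * (y - x))) ((y - x) • h' (x + t * (y - x))) t := by
    intro t _
    have hl : HasDerivAt (fun s : ℝ => x + s * (y - x)) (y - x) t := by
      simpa using ((hasDerivAt_id t).mul_const (y - x)).const_add x
    exact (hd _).scomp t hl
  have hint : IntervalIntegrable (fun t => (y - x) • h' (x + t * (y - x)))
      MeasureTheory.volume 0 1 :=
    (Continuous.intervalIntegrable (by continuity) _ _)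
  simpa using (integral_eq_sub_of_hasDerivAt key hint).symm

lemma dd1_eq {h h' : ℝ → ℂ} (hd : ∀ x, HasDerivAt h (h' x) x) (hc : Continuous h')
    {x y : ℝ} (hxy : x ≠ y) :
    (h y - h x) / ((y : ℂ) - (x : ℂ)) = ∫ t in (0:ℝ)..1, h' (x + t * (y - x)) := by
  rw [ftc_rep hd hc x y, intervalIntegral.integral_smul]
  have hne : ((y : ℂ) - (x : ℂ)) ≠ 0 := sub_ne_zero.2 (by exact_mod_cast hxy.symm)
  rw [real_smul]
  push_cast
  field_simp
  congr 1; funext t; ring_nf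

lemma tendsto_dd1 {h h' : ℝ → ℂ} (hd : ∀ x, HasDerivAt h (h' x) x) (hc : Continuous h')
    (θ : ℝ) {x y : ℕ → ℝ} (hxy : ∀ n, x n < y n)
    (hx : Tendsto x atTop (nhds θ)) (hy : Tendsto y atTop (nhds θ)) :
    Tendsto (fun n => (h (y n) - h (x n)) / ((y n : ℂ) - (x n : ℂ))) atTop (nhds (h' θ)) := by
  rw [Metric.tendsto_atTop]
  intro ε hε
  obtain ⟨δ, hδ, hδ'⟩ := Metric.continuousAt_iff.1 (hc.continuousAt (x := θ)) (ε/2) (by linarith)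
  obtain ⟨N, hN⟩ := eventually_atTop.1
    ((hx.eventually (Metric.ball_mem_nhds θ hδ)).and
      (hy.eventually (Metric.ball_mem_nhds θ hδ)))
  refine ⟨N, fun n hn => ?_⟩
  obtain ⟨hxn, hyn⟩ := hN n hn
  rw [Real.dist_eq] at hxn hyn
  have hne : x n ≠ y n := (hxy n).ne
  rw [dist_eq_norm, dd1_eq hd hc hne]
  have hint : IntervalIntegrable (fun t => h' (x n + t * (y n - x n))) MeasureTheory.volume 0 1 :=
    (Continuous.intervalIntegrable (by continuity) _ _)
  have heq : (∫ t in (0:ℝ)..1, h' (x n + t * (y n - x n))) - h' θ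
      = ∫ t in (0:ℝ)..1, (h' (x n + t * (y n - x n)) - h' θ) := by
    rw [intervalIntegral.integral_sub hint intervalIntegrable_const]
    simp
  rw [heq]
  have hb : ∀ t ∈ Set.uIoc (0:ℝ) 1, ‖h' (x n + t * (y n - x n)) - h' θ‖ ≤ ε/2 := by
    intro t ht
    rw [Set.uIoc_of_le (by norm_num : (0:ℝ) ≤ 1)] at ht
    have h0 : 0 ≤ t := le_of_lt ht.1
    have h1 : t ≤ 1 := ht.2
    have hxy' : 0 < y n - x n := sub_pos.2 (hxy n)
    have hdist : dist (x n + t * (y n - x n)) θ < δ := by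
      rw [Real.dist_eq]
      rw [abs_lt] at hxn hyn ⊢
      constructor <;> nlinarith [hxn.1, hyn.2, hxn.2, hyn.1]
    rw [← dist_eq_norm]
    exact le_of_lt (hδ' hdist)
  calc ‖∫ t in (0:ℝ)..1, (h' (x n + t * (y n - x n)) - h' θ)‖ ≤ (ε/2) * |1 - 0| :=
        intervalIntegral.norm_integral_le_of_norm_le_const hb
    _ < ε := by rw [show |(1:ℝ) - 0| = 1 by norm_num]; linarith

lemma tendsto_dd2 {h h' h'' : ℝ → ℂ} (hd : ∀ x, HasDerivAt h (h' x) x)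
    (hd' : ∀ x, HasDerivAt h' (h'' x) x) (hc : Continuous h'')
    (θ : ℝ) {x y z : ℕ → ℝ} (hxy : ∀ n, x n < y n) (hyz : ∀ n, y n < z n)
    (hx : Tendsto x atTop (nhds θ)) (hy : Tendsto y atTop (nhds θ))
    (hz : Tendsto z atTop (nhds θ)) :
    Tendsto (fun n => ((h (z n) - h (y n)) / ((z n : ℂ) - (y n : ℂ))
        - (h (y n) - h (x n)) / ((y n : ℂ) - (x n : ℂ))) / ((z n : ℂ) - (x n : ℂ)))
      atTop (nhds (h'' θ / 2)) := by
  have hdiffable : Differentiable ℝ h' := fun u => (hd' u).differentiableAt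
  have hc' : Continuous h' := hdiffable.continuous
  rw [Metric.tendsto_atTop]
  intro ε hε
  obtain ⟨δ, hδ, hδ'⟩ := Metric.continuousAt_iff.1 (hc.continuousAt (x := θ)) (ε/2) (by linarith)
  obtain ⟨N, hN⟩ := eventually_atTop.1
    (((hx.eventually (Metric.ball_mem_nhds θ hδ)).and
      (hy.eventually (Metric.ball_mem_nhds θ hδ))).and
      (hz.eventually (Metric.ball_mem_nhds θ hδ)))
  refine ⟨N, fun n hn => ?_⟩
  obtain ⟨⟨hxn, hyn⟩, hzn⟩ := hN n hn
  rw [Real.dist_eq] at hxn hyn hzn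
  set a := x n with ha
  set b := y n with hb
  set c := z n with hcc
  have hab : a < b := hxy n
  have hbc : b < c := hyz n
  have hac : a < c := hab.trans hbc
  have hwpos : (0:ℝ) < c - a := sub_pos.2 hac
  set p : ℝ → ℝ := fun t => a + t * (b - a) with hp
  set q : ℝ → ℝ := fun t => b + t * (c - b) with hq
  have hpc : Continuous p := by fun_prop
  have hqc : Continuous q := by fun_prop
  have key : ∀ t ∈ Set.uIoc (0:ℝ) 1,
      ‖(h' (q t) - h' (p t)) - ((q t - p t : ℝ) : ℂ) * h'' θ‖ ≤ (ε/2) * (c - a) := by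
    intro t ht
    rw [Set.uIoc_of_le (by norm_num : (0:ℝ) ≤ 1)] at ht
    have h0 : 0 ≤ t := le_of_lt ht.1
    have h1 : t ≤ 1 := ht.2
    have hpa : a ≤ p t := by simp only [hp]; nlinarith
    have hpb : p t ≤ b := by simp only [hp]; nlinarith
    have hqb : b ≤ q t := by simp only [hq]; nlinarith
    have hqcle : q t ≤ c := by simp only [hq]; nlinarith
    have hpq : p t ≤ q t := hpb.trans hqb
    have hftc : h' (q t) - h' (p t) = ∫ u in (p t)..(q t), h'' u := by
      rw [integral_eq_sub_of_hasDerivAt (fun u _ => hd' u)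
        (hc.intervalIntegrable _ _)]
    have hconst : ∫ u in (p t)..(q t), h'' θ = ((q t - p t : ℝ) : ℂ) * h'' θ := by
      rw [intervalIntegral.integral_const, real_smul]
    have hsplit : (h' (q t) - h' (p t)) - ((q t - p t : ℝ) : ℂ) * h'' θ
        = ∫ u in (p t)..(q t), (h'' u - h'' θ) := by
      rw [intervalIntegral.integral_sub (hc.intervalIntegrable _ _) intervalIntegrable_const,
        ← hftc, hconst]
    rw [hsplit]
    have hb2 : ∀ u ∈ Set.uIoc (p t) (q t), ‖h'' u - h'' θ‖ ≤ ε/2 := by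
      intro u hu
      rw [Set.uIoc_of_le hpq] at hu
      have hu1 : a ≤ u := hpa.trans (le_of_lt hu.1)
      have hu2 : u ≤ c := hu.2.trans hqcle
      have : dist u θ < δ := by
        rw [Real.dist_eq]
        rw [abs_lt] at hxn hzn ⊢
        constructor <;> nlinarith [hxn.1, hzn.2]
      rw [← dist_eq_norm]
      exact le_of_lt (hδ' this)
    calc ‖∫ u in (p t)..(q t), (h'' u - h'' θ)‖ ≤ (ε/2) * |q t - p t| :=
          intervalIntegral.norm_integral_le_of_norm_le_const hb2
      _ ≤ (ε/2) * (c - a) := by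
          rw [_root_.abs_of_nonneg (by linarith : (0:ℝ) ≤ q t - p t)]
          have hle : q t - p t ≤ c - a := by simp only [hp, hq]; nlinarith
          exact mul_le_mul_of_nonneg_left hle (by linarith)
  have hrep : (h c - h b) / ((c : ℂ) - (b : ℂ)) - (h b - h a) / ((b : ℂ) - (a : ℂ))
      = ∫ t in (0:ℝ)..1, (h' (q t) - h' (p t)) := by
    rw [dd1_eq hd hc' hab.ne, dd1_eq hd hc' hbc.ne,
      intervalIntegral.integral_sub (Continuous.intervalIntegrable (by fun_prop) _ _)
        (Continuous.intervalIntegrable (by fun_prop) _ _)]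
  have hlin : ∫ t in (0:ℝ)..1, ((q t - p t : ℝ) : ℂ) * h'' θ
      = ((c - a : ℝ) : ℂ) * (h'' θ / 2) := by
    rw [intervalIntegral.integral_mul_const, intervalIntegral.integral_ofReal]
    have : (∫ t in (0:ℝ)..1, (q t - p t)) = (c - a) / 2 := by
      have : (fun t => q t - p t) = fun t => (b - a) + t * ((c - b) - (b - a)) := by
        funext t; simp only [hp, hq]; ring
      rw [this, intervalIntegral.integral_add
          (Continuous.intervalIntegrable (by fun_prop) _ _)
          (Continuous.intervalIntegrable (by fun_prop) _ _),
        intervalIntegral.integral_const, intervalIntegral.integral_mul_const, integral_id]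
      simp; ring
    rw [this]; push_cast; ring
  have hdiff : ((h c - h b) / ((c : ℂ) - (b : ℂ)) - (h b - h a) / ((b : ℂ) - (a : ℂ)))
      - ((c - a : ℝ) : ℂ) * (h'' θ / 2)
      = ∫ t in (0:ℝ)..1, ((h' (q t) - h' (p t)) - ((q t - p t : ℝ) : ℂ) * h'' θ) := by
    rw [intervalIntegral.integral_sub (Continuous.intervalIntegrable (by fun_prop) _ _)
      (Continuous.intervalIntegrable (by fun_prop) _ _), ← hrep, hlin]
  have hwne : ((c:ℂ) - (a:ℂ)) ≠ 0 := sub_ne_zero.2 (by exact_mod_cast hac.ne')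
  have hnorm : ‖((h c - h b) / ((c : ℂ) - (b : ℂ)) - (h b - h a) / ((b : ℂ) - (a : ℂ)))
      - ((c - a : ℝ) : ℂ) * (h'' θ / 2)‖ ≤ (ε/2) * (c - a) * |1 - 0| := by
    rw [hdiff]
    exact intervalIntegral.norm_integral_le_of_norm_le_const key
  rw [dist_eq_norm]
  have hrw : ((h c - h b) / ((c : ℂ) - (b : ℂ)) - (h b - h a) / ((b : ℂ) - (a : ℂ)))
        / ((c : ℂ) - (a : ℂ)) - h'' θ / 2
      = (((h c - h b) / ((c : ℂ) - (b : ℂ)) - (h b - h a) / ((b : ℂ) - (a : ℂ)))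
        - ((c - a : ℝ) : ℂ) * (h'' θ / 2)) / ((c : ℂ) - (a : ℂ)) := by
    have habs : ∀ (Δ W : ℂ), W ≠ 0 → Δ / W - h'' θ / 2 = (Δ - W * (h'' θ / 2)) / W := by
      intro Δ W hW; rw [eq_div_iff hW, sub_mul, div_mul_cancel₀ _ hW]; ring
    push_cast
    exact habs _ _ hwne
  rw [hrw, norm_div]
  have hwnorm : ‖(c:ℂ) - (a:ℂ)‖ = c - a := by
    rw [show ((c:ℂ) - (a:ℂ)) = ((c - a : ℝ) : ℂ) by push_cast; ring, Complex.norm_real,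
      Real.norm_eq_abs, _root_.abs_of_pos hwpos]
  rw [hwnorm, div_lt_iff₀ hwpos]
  have : |(1:ℝ) - 0| = 1 := by norm_num
  rw [this] at hnorm
  nlinarith

lemma exp_ne {x y : ℝ} (h1 : x < y) (h2 : y - x < 2 * Real.pi) :
    Complex.exp ((y:ℂ) * I) - Complex.exp ((x:ℂ) * I) ≠ 0 := by
  rw [sub_ne_zero]
  intro heq
  obtain ⟨k, hk⟩ := Complex.exp_eq_exp_iff_exists_int.1 heq
  have hC : ((y:ℂ) - (x:ℂ)) * I = ((k * (2 * Real.pi) : ℝ) : ℂ) * I := by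
    push_cast
    linear_combination hk
  have hC2 : ((y:ℂ) - (x:ℂ)) = ((k * (2 * Real.pi) : ℝ) : ℂ) := mul_right_cancel₀ I_ne_zero hC
  have hR : y - x = k * (2 * Real.pi) := by exact_mod_cast hC2
  have hpi := Real.pi_pos
  have hk0 : (0:ℝ) < (k:ℝ) := by
    by_contra hcon
    push_neg at hcon
    nlinarith
  have hk1 : (k:ℝ) < 1 := by
    by_contra hcon
    push_neg at hcon
    nlinarith
  have h5 : (0:ℤ) < k := by exact_mod_cast hk0
  have h6 : k < 1 := by exact_mod_cast hk1
  omega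

end EnlargedAux

end

set_option maxHeartbeats 1000000 in
open EnlargedAux in
/-- continuity of the enlarged projective cocycle on the diagonal: as three
distinct cyclically ordered points converge to `θ`, the modulus of the parameter
`σ_{(θ₁,θ₂,θ₃)}` (where `σ̄ = (τ-1)/(cτ-a)`) of the interpolating Möbius map converges to
`sqrt((Df(θ)²(Df(θ)-1)² + D²f(θ)²)/(Df(θ)²(Df(θ)+1)² + D²f(θ)²))`. -/
theorem enlarged_cocycle_diagonal (f : ℝ → ℝ) (hf : ContDiff ℝ 2 f)
    (hf' : ∀ x, 0 < deriv f x)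
    (hper : ∀ x, f (x + 2 * Real.pi) = f x + 2 * Real.pi)
    (θ : ℝ) (t₁ t₂ t₃ : ℕ → ℝ)
    (hord : ∀ n, t₁ n < t₂ n ∧ t₂ n < t₃ n) (hsp : ∀ n, t₃ n - t₁ n < 2 * Real.pi)
    (h1 : Tendsto t₁ atTop (nhds θ)) (h2 : Tendsto t₂ atTop (nhds θ))
    (h3 : Tendsto t₃ atTop (nhds θ))
    (τ σ : ℕ → ℂ)
    (hτ : ∀ n, τ n =
      (Complex.exp (t₂ n * Complex.I) - Complex.exp (t₁ n * Complex.I)) /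
        (Complex.exp (f (t₂ n) * Complex.I) - Complex.exp (f (t₁ n) * Complex.I)) *
      ((Complex.exp (f (t₃ n) * Complex.I) - Complex.exp (f (t₂ n) * Complex.I)) /
        (Complex.exp (t₃ n * Complex.I) - Complex.exp (t₂ n * Complex.I))))
    (hσ : ∀ n, (starRingEnd ℂ) (σ n) =
      (τ n - 1) / (Complex.exp (t₃ n * Complex.I) * τ n - Complex.exp (t₁ n * Complex.I))) :
    Tendsto (fun n => ‖σ n‖) atTop
      (nhds (Real.sqrt
        ((deriv f θ ^ 2 * (deriv f θ - 1) ^ 2 + deriv (deriv f) θ ^ 2) /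
          (deriv f θ ^ 2 * (deriv f θ + 1) ^ 2 + deriv (deriv f) θ ^ 2)))) := by
  have hpi := Real.pi_pos
  -- basic differentiability facts
  have hfd : Differentiable ℝ f := hf.differentiable (by norm_num)
  have hfd1 : ∀ x, HasDerivAt f (deriv f x) x := fun x => (hfd x).hasDerivAt
  have hcd1 : ContDiff ℝ 1 (deriv f) := by
    have h2' : ContDiff ℝ ((1:ℕ) + 1) f := by exact_mod_cast hf
    exact (contDiff_succ_iff_deriv.1 h2').2.2
  have hfd2 : ∀ x, HasDerivAt (deriv f) (deriv (deriv f) x) x :=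
    fun x => ((hcd1.differentiable one_ne_zero) x).hasDerivAt
  have hcont0 : Continuous f := hf.continuous
  have hcont1 : Continuous (deriv f) := hcd1.continuous
  have hcont2 : Continuous (deriv (deriv f)) := hcd1.continuous_deriv le_rfl
  have hmono : StrictMono f := strictMono_of_deriv_pos hf'
  -- complex exponential derivative facts
  have hg : ∀ s : ℝ, HasDerivAt (fun s : ℝ => Complex.exp ((s:ℂ) * I))
      (Complex.exp ((s:ℂ) * I) * I) s := by
    intro s
    have hin : HasDerivAt (fun s : ℝ => (s:ℂ) * I) I s := by
      simpa using (Complex.ofRealCLM.hasDerivAt (x := s)).mul_const I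
    simpa using hin.cexp
  have hG1 : ∀ s : ℝ, HasDerivAt (fun s : ℝ => Complex.exp ((s:ℂ) * I) * I)
      (Complex.exp ((s:ℂ) * I) * I * I) s := fun s => (hg s).mul_const I
  have hF : ∀ s : ℝ, HasDerivAt (fun s : ℝ => Complex.exp (((f s):ℂ) * I))
      (Complex.exp (((f s):ℂ) * I) * (Complex.ofReal (deriv f s) * I)) s := by
    intro s
    have hin : HasDerivAt (fun s : ℝ => ((f s : ℂ)) * I) (Complex.ofReal (deriv f s) * I) s :=
      ((hfd1 s).ofReal_comp).mul_const I
    simpa using hin.cexp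
  have hF1 : ∀ s : ℝ, HasDerivAt
      (fun s : ℝ => Complex.exp (((f s):ℂ) * I) * (Complex.ofReal (deriv f s) * I))
      (Complex.exp (((f s):ℂ) * I) * (Complex.ofReal (deriv f s) * I)
          * (Complex.ofReal (deriv f s) * I)
        + Complex.exp (((f s):ℂ) * I) * (Complex.ofReal (deriv (deriv f) s) * I)) s := by
    intro s
    exact (hF s).mul (((hfd2 s).ofReal_comp).mul_const I)
  have hG1c : Continuous (fun s : ℝ => Complex.exp ((s:ℂ) * I) * I) := by fun_prop
  have hG2c : Continuous (fun s : ℝ => Complex.exp ((s:ℂ) * I) * I * I) := by fun_prop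
  have hF1c : Continuous
      (fun s : ℝ => Complex.exp (((f s):ℂ) * I) * (Complex.ofReal (deriv f s) * I)) := by
    fun_prop
  have hF2c : Continuous (fun s : ℝ =>
      Complex.exp (((f s):ℂ) * I) * (Complex.ofReal (deriv f s) * I)
          * (Complex.ofReal (deriv f s) * I)
        + Complex.exp (((f s):ℂ) * I) * (Complex.ofReal (deriv (deriv f) s) * I)) := by
    fun_prop
  -- the divided-difference sequences
  set Dg12 : ℕ → ℂ := fun n =>
    (Complex.exp ((t₂ n : ℂ) * I) - Complex.exp ((t₁ n : ℂ) * I)) / ((t₂ n : ℂ) - (t₁ n : ℂ))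
    with hDg12def
  set Dg23 : ℕ → ℂ := fun n =>
    (Complex.exp ((t₃ n : ℂ) * I) - Complex.exp ((t₂ n : ℂ) * I)) / ((t₃ n : ℂ) - (t₂ n : ℂ))
    with hDg23def
  set Dg13 : ℕ → ℂ := fun n =>
    (Complex.exp ((t₃ n : ℂ) * I) - Complex.exp ((t₁ n : ℂ) * I)) / ((t₃ n : ℂ) - (t₁ n : ℂ))
    with hDg13def
  set DF12 : ℕ → ℂ := fun n =>
    (Complex.exp ((f (t₂ n) : ℂ) * I) - Complex.exp ((f (t₁ n) : ℂ) * I))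
      / ((t₂ n : ℂ) - (t₁ n : ℂ)) with hDF12def
  set DF23 : ℕ → ℂ := fun n =>
    (Complex.exp ((f (t₃ n) : ℂ) * I) - Complex.exp ((f (t₂ n) : ℂ) * I))
      / ((t₃ n : ℂ) - (t₂ n : ℂ)) with hDF23def
  set Sg : ℕ → ℂ := fun n => (Dg23 n - Dg12 n) / ((t₃ n : ℂ) - (t₁ n : ℂ)) with hSgdef
  set SF : ℕ → ℂ := fun n => (DF23 n - DF12 n) / ((t₃ n : ℂ) - (t₁ n : ℂ)) with hSFdef
  set M : ℕ → ℂ := fun n => (Dg12 n * SF n - DF12 n * Sg n) / (DF12 n * Dg23 n) with hMdef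
  -- limits
  have hord12 : ∀ n, t₁ n < t₂ n := fun n => (hord n).1
  have hord23 : ∀ n, t₂ n < t₃ n := fun n => (hord n).2
  have hord13 : ∀ n, t₁ n < t₃ n := fun n => (hord n).1.trans (hord n).2
  have hDg12lim : Tendsto Dg12 atTop (nhds (Complex.exp ((θ:ℂ) * I) * I)) := by
    rw [hDg12def]; exact tendsto_dd1 hg hG1c θ hord12 h1 h2
  have hDg23lim : Tendsto Dg23 atTop (nhds (Complex.exp ((θ:ℂ) * I) * I)) := by
    rw [hDg23def]; exact tendsto_dd1 hg hG1c θ hord23 h2 h3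
  have hDg13lim : Tendsto Dg13 atTop (nhds (Complex.exp ((θ:ℂ) * I) * I)) := by
    rw [hDg13def]; exact tendsto_dd1 hg hG1c θ hord13 h1 h3
  have hDF12lim : Tendsto DF12 atTop
      (nhds (Complex.exp ((f θ : ℂ) * I) * (Complex.ofReal (deriv f θ) * I))) := by
    rw [hDF12def]; exact tendsto_dd1 hF hF1c θ hord12 h1 h2
  have hDF23lim : Tendsto DF23 atTop
      (nhds (Complex.exp ((f θ : ℂ) * I) * (Complex.ofReal (deriv f θ) * I))) := by
    rw [hDF23def]; exact tendsto_dd1 hF hF1c θ hord23 h2 h3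
  have hSglim : Tendsto Sg atTop (nhds ((Complex.exp ((θ:ℂ) * I) * I * I) / 2)) := by
    rw [hSgdef, hDg23def, hDg12def]
    exact tendsto_dd2 hg hG1 hG2c θ hord12 hord23 h1 h2 h3
  have hSFlim : Tendsto SF atTop (nhds
      ((Complex.exp ((f θ : ℂ) * I) * (Complex.ofReal (deriv f θ) * I)
          * (Complex.ofReal (deriv f θ) * I)
        + Complex.exp ((f θ : ℂ) * I) * (Complex.ofReal (deriv (deriv f) θ) * I)) / 2)) := by
    rw [hSFdef, hDF23def, hDF12def]
    exact tendsto_dd2 hF hF1 hF2c θ hord12 hord23 h1 h2 h3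
  set p : ℝ := deriv f θ with hpdef
  set qq : ℝ := deriv (deriv f) θ with hqqdef
  have hppos : 0 < p := hf' θ
  have hpne : (p : ℂ) ≠ 0 := by exact_mod_cast hppos.ne'
  set e1 : ℂ := Complex.exp ((θ:ℂ) * I) with he1def
  set e2 : ℂ := Complex.exp ((f θ : ℂ) * I) with he2def
  have he1 : e1 ≠ 0 := Complex.exp_ne_zero _
  have he2 : e2 ≠ 0 := Complex.exp_ne_zero _
  set G1θ : ℂ := e1 * I with hG1θdef
  set G2θ : ℂ := e1 * I * I with hG2θdef
  set F1θ : ℂ := e2 * ((p:ℂ) * I) with hF1θdef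
  set F2θ : ℂ := e2 * ((p:ℂ) * I) * ((p:ℂ) * I) + e2 * ((qq:ℂ) * I) with hF2θdef
  set L : ℂ := (G1θ * (F2θ / 2) - F1θ * (G2θ / 2)) / (F1θ * G1θ) with hLdef
  have hdenne : F1θ * G1θ ≠ 0 :=
    mul_ne_zero (mul_ne_zero he2 (mul_ne_zero hpne I_ne_zero))
      (mul_ne_zero he1 I_ne_zero)
  have hMlim : Tendsto M atTop (nhds L) := by
    rw [hMdef, hLdef]
    exact Tendsto.div ((hDg12lim.mul hSFlim).sub (hDF12lim.mul hSglim))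
      (hDF12lim.mul hDg23lim) hdenne
  -- explicit formula for L
  have hnum : G1θ * (F2θ / 2) - F1θ * (G2θ / 2)
      = -(e1 * e2 / 2) * ((qq:ℂ) - I * (p:ℂ) * (1 - (p:ℂ))) := by
    rw [hG1θdef, hG2θdef, hF1θdef, hF2θdef]
    linear_combination (e1 * e2 / 2 * (((p:ℂ)^2 - (p:ℂ)) * I + (qq:ℂ))) * Complex.I_sq
  have hden2 : F1θ * G1θ = -(e1 * e2 * (p:ℂ)) := by
    rw [hG1θdef, hF1θdef]
    linear_combination (e1 * e2 * (p:ℂ)) * Complex.I_sq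
  have hL2 : L = ((qq:ℂ) - I * (p:ℂ) * (1 - (p:ℂ))) / (2 * (p:ℂ)) := by
    rw [hLdef, hnum, hden2, div_eq_div_iff (by simpa using mul_ne_zero (mul_ne_zero he1 he2) hpne)
      (by exact mul_ne_zero two_ne_zero hpne)]
    ring
  have hQ2 : e1 * L + G1θ = e1 * (((qq:ℂ) + I * (p:ℂ) * (1 + (p:ℂ))) / (2 * (p:ℂ))) := by
    rw [hL2, hG1θdef]
    field_simp
    ring
  have hvne : ((qq:ℂ) + I * (p:ℂ) * (1 + (p:ℂ))) ≠ 0 := by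
    intro hcon
    have him := congrArg Complex.im hcon
    simp [Complex.add_im, Complex.mul_im, Complex.mul_re] at him
    rcases him with h | h <;> nlinarith [hppos]
  have hQne : e1 * L + G1θ ≠ 0 := by
    rw [hQ2]
    exact mul_ne_zero he1 (div_ne_zero hvne (mul_ne_zero two_ne_zero hpne))
  -- pointwise identity for conj σ
  have heqσ : ∀ n, (starRingEnd ℂ) (σ n)
      = M n / (Complex.exp ((t₃ n : ℂ) * I) * M n + Dg13 n) := by
    intro n
    have hab := (hord n).1
    have hbc := (hord n).2
    have hac := hab.trans hbc
    have hsp' := hsp n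
    have hf21 : f (t₁ n) < f (t₂ n) := hmono hab
    have hf32 : f (t₂ n) < f (t₃ n) := hmono hbc
    have hf31 : f (t₁ n) < f (t₃ n) := hf21.trans hf32
    have hfs21 : f (t₂ n) - f (t₁ n) < 2 * Real.pi := by
      have := hmono (show t₂ n < t₁ n + 2 * Real.pi by linarith)
      rw [hper] at this; linarith
    have hfs32 : f (t₃ n) - f (t₂ n) < 2 * Real.pi := by
      have := hmono (show t₃ n < t₂ n + 2 * Real.pi by linarith)
      rw [hper] at this; linarith
    have hba : Complex.exp ((t₂ n : ℂ) * I) - Complex.exp ((t₁ n : ℂ) * I) ≠ 0 :=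
      exp_ne hab (by linarith)
    have hcb : Complex.exp ((t₃ n : ℂ) * I) - Complex.exp ((t₂ n : ℂ) * I) ≠ 0 :=
      exp_ne hbc (by linarith)
    have hBA : Complex.exp ((f (t₂ n) : ℂ) * I) - Complex.exp ((f (t₁ n) : ℂ) * I) ≠ 0 :=
      exp_ne hf21 hfs21
    have hCB : Complex.exp ((f (t₃ n) : ℂ) * I) - Complex.exp ((f (t₂ n) : ℂ) * I) ≠ 0 :=
      exp_ne hf32 hfs32
    have d21 : ((t₂ n : ℂ) - (t₁ n : ℂ)) ≠ 0 := sub_ne_zero.2 (by exact_mod_cast hab.ne')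
    have d32 : ((t₃ n : ℂ) - (t₂ n : ℂ)) ≠ 0 := sub_ne_zero.2 (by exact_mod_cast hbc.ne')
    have d31 : ((t₃ n : ℂ) - (t₁ n : ℂ)) ≠ 0 := sub_ne_zero.2 (by exact_mod_cast hac.ne')
    have hDF12ne : DF12 n ≠ 0 := div_ne_zero hBA d21
    have hDg23ne : Dg23 n ≠ 0 := div_ne_zero hcb d32
    have hSF' : ((t₃ n : ℂ) - (t₁ n : ℂ)) * SF n = DF23 n - DF12 n := by
      rw [hSFdef]; field_simp
    have hSg' : ((t₃ n : ℂ) - (t₁ n : ℂ)) * Sg n = Dg23 n - Dg12 n := by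
      rw [hSgdef]; field_simp
    have hDg13' : ((t₃ n : ℂ) - (t₁ n : ℂ)) * Dg13 n
        = Complex.exp ((t₃ n : ℂ) * I) - Complex.exp ((t₁ n : ℂ) * I) := by
      rw [hDg13def]; field_simp
    have hτ' : τ n = (Dg12 n * DF23 n) / (DF12 n * Dg23 n) := by
      rw [hτ n, hDg12def, hDg23def, hDF12def, hDF23def]
      simp only
      field_simp
    have hM' : ((t₃ n : ℂ) - (t₁ n : ℂ)) * M n
        = (Dg12 n * DF23 n - DF12 n * Dg23 n) / (DF12 n * Dg23 n) := by
      rw [hMdef]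
      simp only
      rw [← mul_div_assoc]
      rw [show ((t₃ n : ℂ) - (t₁ n : ℂ)) * (Dg12 n * SF n - DF12 n * Sg n)
          = Dg12 n * (((t₃ n : ℂ) - (t₁ n : ℂ)) * SF n)
            - DF12 n * (((t₃ n : ℂ) - (t₁ n : ℂ)) * Sg n) by ring, hSF', hSg']
      congr 1
      ring
    have hτ1 : τ n - 1 = ((t₃ n : ℂ) - (t₁ n : ℂ)) * M n := by
      rw [hτ', hM', div_sub_one (mul_ne_zero hDF12ne hDg23ne)]
    have hτ2 : Complex.exp ((t₃ n : ℂ) * I) * τ n - Complex.exp ((t₁ n : ℂ) * I)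
        = ((t₃ n : ℂ) - (t₁ n : ℂ))
          * (Complex.exp ((t₃ n : ℂ) * I) * M n + Dg13 n) := by
      rw [show ((t₃ n : ℂ) - (t₁ n : ℂ))
            * (Complex.exp ((t₃ n : ℂ) * I) * M n + Dg13 n)
          = Complex.exp ((t₃ n : ℂ) * I) * (((t₃ n : ℂ) - (t₁ n : ℂ)) * M n)
            + ((t₃ n : ℂ) - (t₁ n : ℂ)) * Dg13 n by ring, ← hτ1, hDg13']
      ring
    rw [hσ n, hτ1, hτ2, mul_div_mul_left _ _ d31]
  -- convergence of conj σ
  have hc3 : Tendsto (fun n => Complex.exp ((t₃ n : ℂ) * I)) atTop (nhds e1) := by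
    rw [he1def]
    exact (((Complex.continuous_exp.comp
      (Complex.continuous_ofReal.mul continuous_const)).tendsto θ)).comp h3
  have hkey : Tendsto (fun n => (starRingEnd ℂ) (σ n)) atTop (nhds (L / (e1 * L + G1θ))) := by
    have hEq : (fun n => (starRingEnd ℂ) (σ n))
        = fun n => M n / (Complex.exp ((t₃ n : ℂ) * I) * M n + Dg13 n) := funext heqσ
    rw [hEq]
    exact Tendsto.div hMlim ((hc3.mul hMlim).add hDg13lim) hQne
  -- compute the modulus of the limit
  have hSlim : L / (e1 * L + G1θ)
      = ((qq:ℂ) - I * (p:ℂ) * (1 - (p:ℂ))) / (e1 * ((qq:ℂ) + I * (p:ℂ) * (1 + (p:ℂ)))) := by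
    rw [hQ2, hL2]
    field_simp [he1, hpne, hvne]
  have habsval : Norm.norm (((qq:ℂ) - I * (p:ℂ) * (1 - (p:ℂ)))
      / (e1 * ((qq:ℂ) + I * (p:ℂ) * (1 + (p:ℂ)))))
      = Real.sqrt ((p ^ 2 * (p - 1) ^ 2 + qq ^ 2) / (p ^ 2 * (p + 1) ^ 2 + qq ^ 2)) := by
    rw [norm_div, norm_mul, he1def, Complex.norm_exp_ofReal_mul_I, one_mul]
    have hu : ((qq:ℂ) - I * (p:ℂ) * (1 - (p:ℂ)))
        = ((qq : ℝ) : ℂ) + ((-(p * (1 - p)) : ℝ) : ℂ) * I := by push_cast; ring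
    have hv : ((qq:ℂ) + I * (p:ℂ) * (1 + (p:ℂ)))
        = ((qq : ℝ) : ℂ) + (((p * (1 + p)) : ℝ) : ℂ) * I := by push_cast; ring
    rw [hu, hv, Complex.norm_add_mul_I, Complex.norm_add_mul_I]
    rw [← Real.sqrt_div (by positivity)]
    congr 1
    rw [div_eq_div_iff (by positivity) (by positivity)]
    ring
  have hfinal := (continuous_norm.tendsto _).comp hkey
  have hcomp : ((fun z : ℂ => ‖z‖) ∘ fun n => (starRingEnd ℂ) (σ n)) = fun n => ‖σ n‖ := by
    funext n
    exact Complex.norm_conj _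
  rw [hcomp] at hfinal
  rw [hSlim, habsval] at hfinal
  exact hfinal
end
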